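/- Let λ be a positive natural number, M ≥ 0, R_min > 0, and assume δ := M·λ²/(8·R_min) < 1. Let R : ℕ → ℝ satisfy R(s) ≥ R_min for all s ≤ t+λ and |R(s+1) − 2·R(s) + R(s−1)| ≤ M for all s with t+1 ≤ s ≤ t+λ−1. Let q : ℕ → ℝ be positive, and define F(s) := R(s)/q(s) and F̃(s) := R̃(s)/q(s), where R̃ is the linear interpolant R̃(t+i) := R(t) + (i/λ)·(R(t+λ) − R(t)) for 0 ≤ i ≤ λ. Suppose that for indices t ≤ i < j ≤ t+λ and positive reals P, Q the flow consistency F(i)·P = F(j)·Q holds. Then F̃(i)·P = F̃(j)·Q·θ for some θ ∈ ℝ with |θ − 1| ≤ 2δ/(1−δ). -/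

import Mathlib

private lemma prefix_avg (d : ℕ → ℝ) {n i : ℕ} (hi : i ≤ n)
    (hmono : ∀ a b : ℕ, a ≤ b → b < n → d b ≤ d a) :
    (i : ℝ) * ∑ s ∈ Finset.range n, d s ≤ (n : ℝ) * ∑ s ∈ Finset.range i, d s := by
  rcases Nat.eq_zero_or_pos i with rfl | hi0
  · simp
  obtain ⟨m, rfl⟩ : ∃ m, i = m + 1 := ⟨i - 1, (Nat.succ_pred_eq_of_pos hi0).symm⟩
  have hmn : m < n := by omega
  have hsplit : ∑ s ∈ Finset.range n, d s
      = ∑ s ∈ Finset.range (m+1), d s + ∑ s ∈ Finset.Ico (m+1) n, d s :=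
    (Finset.sum_range_add_sum_Ico d hi).symm
  have h1 : (m + 1 : ℝ) * d m ≤ ∑ s ∈ Finset.range (m+1), d s := by
    have := Finset.card_nsmul_le_sum (Finset.range (m+1)) d (d m)
      (fun s hs => hmono s m (Nat.lt_succ_iff.mp (Finset.mem_range.mp hs)) hmn)
    simpa [Finset.card_range, nsmul_eq_mul] using this
  have h2 : ∑ s ∈ Finset.Ico (m+1) n, d s ≤ ((n : ℝ) - (m+1)) * d m := by
    have hs := Finset.sum_le_card_nsmul (Finset.Ico (m+1) n) d (d m)
      (fun s hs => by
        obtain ⟨h1', h2'⟩ := Finset.mem_Ico.mp hs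
        exact hmono m s (by omega) h2')
    rw [Nat.card_Ico, nsmul_eq_mul] at hs
    have hc : ((n - (m+1) : ℕ) : ℝ) = (n:ℝ) - (m+1) := by
      push_cast [Nat.cast_sub (by omega : m + 1 ≤ n)]; ring
    rw [hc] at hs
    exact hs
  have hmn' : (m + 1 : ℝ) ≤ (n : ℝ) := by exact_mod_cast hmn
  rw [hsplit]
  push_cast
  nlinarith [h1, h2]

private lemma chord_le (f : ℕ → ℝ) (n : ℕ)
    (hconv : ∀ k : ℕ, 1 ≤ k → k + 1 ≤ n → 0 ≤ f (k+1) - 2 * f k + f (k-1))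
    (i : ℕ) (hi : i ≤ n) :
    (n:ℝ) * f i ≤ (n:ℝ) * f 0 + (i:ℝ) * (f n - f 0) := by
  set d : ℕ → ℝ := fun s => f (s+1) - f s with hd
  have hstep : ∀ b : ℕ, b + 1 < n → d b ≤ d (b+1) := by
    intro b hb
    have h := hconv (b+1) (by omega) (by omega)
    have hb1 : (b + 1) - 1 = b := by omega
    rw [hb1] at h
    simp only [hd]
    linarith
  have hincr : ∀ a b : ℕ, a ≤ b → b < n → d a ≤ d b := by
    intro a b hab hbn
    obtain ⟨m, rfl⟩ := Nat.exists_eq_add_of_le hab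
    induction m with
    | zero => simp
    | succ m ih =>
        have h1 : d a ≤ d (a + m) := ih (by omega) (by omega)
        have h2 : d (a + m) ≤ d (a + m + 1) := hstep (a + m) (by omega)
        have he : a + (m + 1) = a + m + 1 := by omega
        rw [he]
        linarith
  have hp := prefix_avg (fun s => -(d s)) hi
    (fun a b hab hbn => by simpa using hincr a b hab hbn)
  simp only [Finset.sum_neg_distrib] at hp
  have tel1 : ∑ s ∈ Finset.range i, d s = f i - f 0 := Finset.sum_range_sub f i
  have tel2 : ∑ s ∈ Finset.range n, d s = f n - f 0 := Finset.sum_range_sub f n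
  rw [tel1, tel2] at hp
  have hn0 : (0:ℝ) ≤ (n:ℝ) := Nat.cast_nonneg n
  nlinarith [hp]

private lemma chord_ge (f : ℕ → ℝ) (n : ℕ)
    (hconc : ∀ k : ℕ, 1 ≤ k → k + 1 ≤ n → f (k+1) - 2 * f k + f (k-1) ≤ 0)
    (i : ℕ) (hi : i ≤ n) :
    (n:ℝ) * f 0 + (i:ℝ) * (f n - f 0) ≤ (n:ℝ) * f i := by
  have := chord_le (fun s => -(f s)) n
    (fun k hk hkn => by
      have h := hconc k hk hkn
      show (0:ℝ) ≤ -f (k+1) - 2 * -f k + -f (k-1)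
      linarith) i hi
  linarith

private lemma interp_err (n : ℕ) (hn : 0 < n) (M : ℝ) (hM : 0 ≤ M) (g : ℕ → ℝ)
    (hsec : ∀ k : ℕ, 1 ≤ k → k + 1 ≤ n → |g (k+1) - 2 * g k + g (k-1)| ≤ M)
    (k : ℕ) (hk : k ≤ n) :
    |g 0 + ((k:ℝ)/(n:ℝ)) * (g n - g 0) - g k| ≤ M * (n:ℝ)^2 / 8 := by
  have hn' : (0:ℝ) < (n:ℝ) := by exact_mod_cast hn
  have hn0 : (n:ℝ) ≠ 0 := ne_of_gt hn'
  -- upper bound: v s := interp error minus M/2 s(n-s) is convex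
  have hupper : g 0 + ((k:ℝ)/(n:ℝ)) * (g n - g 0) - g k ≤ M/2 * (k:ℝ) * ((n:ℝ) - k) := by
    have hc := chord_le
      (fun s : ℕ => g 0 + ((s:ℝ)/(n:ℝ)) * (g n - g 0) - g s - M/2 * (s:ℝ) * ((n:ℝ) - s)) n
      (fun s hs1 hsn => by
        obtain ⟨m, rfl⟩ : ∃ m, s = m + 1 := ⟨s - 1, by omega⟩
        have hb := hsec (m+1) hs1 hsn
        simp only [Nat.add_sub_cancel] at hb ⊢
        rw [abs_le] at hb
        push_cast
        have lin : ((m:ℝ)+1+1)/(n:ℝ)*(g n - g 0) - 2*(((m:ℝ)+1)/(n:ℝ)*(g n - g 0))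
            + (m:ℝ)/(n:ℝ)*(g n - g 0) = 0 := by field_simp; ring
        have quad : M/2*((m:ℝ)+1+1)*((n:ℝ)-((m:ℝ)+1+1)) - 2*(M/2*((m:ℝ)+1)*((n:ℝ)-((m:ℝ)+1)))
            + M/2*(m:ℝ)*((n:ℝ)-(m:ℝ)) = -M := by ring
        have hb2 := hb.2
        nlinarith [lin, quad, hb2]) k hk
    simp only [Nat.cast_zero, zero_div, zero_mul, mul_zero, sub_zero, add_zero] at hc
    -- hc : n * (E k - M/2 k (n-k)) ≤ n * (g0 - g0) + k * ((E n part) - (g0 - g0))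
    have e0 : g 0 + (0:ℝ)/(n:ℝ) * (g n - g 0) - g 0 - M/2 * (0:ℝ) * ((n:ℝ) - 0) = 0 := by ring
    have en : g 0 + ((n:ℝ))/(n:ℝ) * (g n - g 0) - g n - M/2 * (n:ℝ) * ((n:ℝ) - n) = 0 := by
      field_simp
      ring
    nlinarith [hc, e0, en]
  have hlower : -(M/2 * (k:ℝ) * ((n:ℝ) - k)) ≤ g 0 + ((k:ℝ)/(n:ℝ)) * (g n - g 0) - g k := by
    have hc := chord_ge
      (fun s : ℕ => g 0 + ((s:ℝ)/(n:ℝ)) * (g n - g 0) - g s + M/2 * (s:ℝ) * ((n:ℝ) - s)) n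
      (fun s hs1 hsn => by
        obtain ⟨m, rfl⟩ : ∃ m, s = m + 1 := ⟨s - 1, by omega⟩
        have hb := hsec (m+1) hs1 hsn
        simp only [Nat.add_sub_cancel] at hb ⊢
        rw [abs_le] at hb
        push_cast
        have lin : ((m:ℝ)+1+1)/(n:ℝ)*(g n - g 0) - 2*(((m:ℝ)+1)/(n:ℝ)*(g n - g 0))
            + (m:ℝ)/(n:ℝ)*(g n - g 0) = 0 := by field_simp; ring
        have quad : M/2*((m:ℝ)+1+1)*((n:ℝ)-((m:ℝ)+1+1)) - 2*(M/2*((m:ℝ)+1)*((n:ℝ)-((m:ℝ)+1)))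
            + M/2*(m:ℝ)*((n:ℝ)-(m:ℝ)) = -M := by ring
        have hb1 := hb.1
        nlinarith [lin, quad, hb1]) k hk
    simp only [Nat.cast_zero, zero_div, zero_mul, mul_zero, sub_zero, add_zero] at hc
    have e0 : g 0 + (0:ℝ)/(n:ℝ) * (g n - g 0) - g 0 + M/2 * (0:ℝ) * ((n:ℝ) - 0) = 0 := by ring
    have en : g 0 + ((n:ℝ))/(n:ℝ) * (g n - g 0) - g n + M/2 * (n:ℝ) * ((n:ℝ) - n) = 0 := by
      field_simp
      ring
    nlinarith [hc, e0, en]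
  have hq : M/2 * (k:ℝ) * ((n:ℝ) - k) ≤ M * (n:ℝ)^2 / 8 := by
    have hk' : (k:ℝ) ≤ (n:ℝ) := by exact_mod_cast hk
    have hk0 : (0:ℝ) ≤ (k:ℝ) := Nat.cast_nonneg k
    nlinarith [sq_nonneg ((n:ℝ) - 2*k)]
  rw [abs_le]
  constructor
  · linarith
  · linarith

set_option maxHeartbeats 1000000 in
/-- Proposition 1(b): interpolated rewards preserve flow consistency up to a
multiplicative factor `θ` with `|θ - 1| ≤ 2δ/(1 - δ)`, where `δ = M λ² / (8 R_min)`. -/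
theorem interpolated_flow_consistency
    (lam t : ℕ) (hlam : 0 < lam) (M Rmin : ℝ) (hM : 0 ≤ M) (hRmin : 0 < Rmin)
    (hδ : M * (lam : ℝ) ^ 2 / (8 * Rmin) < 1)
    (R q : ℕ → ℝ)
    (hR : ∀ s : ℕ, s ≤ t + lam → Rmin ≤ R s)
    (hsec : ∀ s : ℕ, t + 1 ≤ s → s ≤ t + lam - 1 →
      |R (s + 1) - 2 * R s + R (s - 1)| ≤ M)
    (hq : ∀ s : ℕ, 0 < q s)
    (Rt : ℕ → ℝ)
    (hRt : ∀ i : ℕ, i ≤ lam →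
      Rt (t + i) = R t + ((i : ℝ) / (lam : ℝ)) * (R (t + lam) - R t))
    (i j : ℕ) (hti : t ≤ i) (hij : i < j) (hj : j ≤ t + lam)
    (P Q : ℝ) (hP : 0 < P) (hQ : 0 < Q)
    (hflow : (R i / q i) * P = (R j / q j) * Q) :
    ∃ θ : ℝ,
      (Rt i / q i) * P = (Rt j / q j) * Q * θ ∧
      |θ - 1| ≤ 2 * (M * (lam : ℝ) ^ 2 / (8 * Rmin)) /
        (1 - M * (lam : ℝ) ^ 2 / (8 * Rmin)) := by
  set D : ℝ := M * (lam : ℝ) ^ 2 / (8 * Rmin) with hD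
  set A : ℝ := M * (lam : ℝ) ^ 2 / 8 with hA
  have hlam' : (0:ℝ) < (lam:ℝ) := by exact_mod_cast hlam
  have hD0 : 0 ≤ D := by positivity
  have hAD : A = D * Rmin := by rw [hA, hD]; field_simp
  -- interpolation error bound
  have herr : ∀ k : ℕ, k ≤ lam → |Rt (t + k) - R (t + k)| ≤ A := by
    intro k hk
    rw [hRt k hk]
    have := interp_err lam hlam M hM (fun s => R (t + s))
      (fun s hs1 hsn => by
        have h := hsec (t + s) (by omega) (by omega)
        have e1 : t + s + 1 = t + (s + 1) := by omega
        have e2 : t + s - 1 = t + (s - 1) := by omega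
        rw [e1, e2] at h
        exact h) k hk
    simpa using this
  have hEi : |Rt i - R i| ≤ A := by
    have := herr (i - t) (by omega)
    have e : t + (i - t) = i := by omega
    rwa [e] at this
  have hEj : |Rt j - R j| ≤ A := by
    have := herr (j - t) (by omega)
    have e : t + (j - t) = j := by omega
    rwa [e] at this
  have hRi : Rmin ≤ R i := hR i (by omega)
  have hRj : Rmin ≤ R j := hR j (by omega)
  have hRi0 : 0 < R i := lt_of_lt_of_le hRmin hRi
  have hRj0 : 0 < R j := lt_of_lt_of_le hRmin hRj
  have hD1 : D < 1 := hδ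
  rw [abs_le] at hEi hEj
  have hADRj : A ≤ D * R j := by
    rw [hAD]
    nlinarith [mul_nonneg hD0 (by linarith : (0:ℝ) ≤ R j - Rmin)]
  have hADRi : A ≤ D * R i := by
    rw [hAD]
    nlinarith [mul_nonneg hD0 (by linarith : (0:ℝ) ≤ R i - Rmin)]
  have h1D : 0 < 1 - D := by linarith
  have hRtjlb : (1 - D) * R j ≤ Rt j := by nlinarith [hEj.1, hADRj]
  have hRtj0 : 0 < Rt j := lt_of_lt_of_le (mul_pos h1D hRj0) hRtjlb
  have hqi := hq i
  have hqj := hq j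
  have hqi' : q i ≠ 0 := ne_of_gt hqi
  have hqj' : q j ≠ 0 := ne_of_gt hqj
  have hRi' : R i ≠ 0 := ne_of_gt hRi0
  have hRtj' : Rt j ≠ 0 := ne_of_gt hRtj0
  refine ⟨(Rt i * R j) / (R i * Rt j), ?_, ?_⟩
  · have hflow' : R i * P * q j = R j * Q * q i := by
      field_simp at hflow
      linarith [hflow]
    field_simp
    linear_combination Rt i * hflow'
  · have hden : 0 < R i * Rt j := mul_pos hRi0 hRtj0
    have n1 : (Rt i - R i) * R j ≤ A * R j := mul_le_mul_of_nonneg_right hEi.2 hRj0.le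
    have n2 : -(A * R j) ≤ (Rt i - R i) * R j := by nlinarith [hEi.1, hRj0.le]
    have n3 : (Rt j - R j) * R i ≤ A * R i := mul_le_mul_of_nonneg_right hEj.2 hRi0.le
    have n4 : -(A * R i) ≤ (Rt j - R j) * R i := by nlinarith [hEj.1, hRi0.le]
    have hnum : |Rt i * R j - R i * Rt j| ≤ 2 * D * (R i * R j) := by
      rw [abs_le]
      constructor <;> nlinarith [n1, n2, n3, n4, hADRj, hADRi]
    have heq : (Rt i * R j) / (R i * Rt j) - 1 = (Rt i * R j - R i * Rt j) / (R i * Rt j) := by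
      field_simp
    rw [heq, abs_div, abs_of_pos hden, div_le_div_iff₀ hden h1D]
    have step1 : |Rt i * R j - R i * Rt j| * (1 - D) ≤ 2 * D * (R i * R j) * (1 - D) :=
      mul_le_mul_of_nonneg_right hnum h1D.le
    have step3 : 2 * D * (R i * ((1 - D) * R j)) ≤ 2 * D * (R i * Rt j) := by
      have : (0:ℝ) ≤ 2 * D * R i := by positivity
      nlinarith [hRtjlb]
    calc |Rt i * R j - R i * Rt j| * (1 - D) ≤ 2 * D * (R i * R j) * (1 - D) := step1
      _ = 2 * D * (R i * ((1 - D) * R j)) := by ring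
      _ ≤ 2 * D * (R i * Rt j) := step3
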